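/- (Neyman orthogonality of the loss L^ortho-2 for unknown barrier a.) Let a > 0. Suppose Y, T : Ω → ℝ are random variables, y_o, t_o, r_o : E → ℝ are bounded measurable functions such that E[Y | X] = y_o(X) almost surely, E[T | X] = t_o(X) almost surely, and a·y_o(x) = r_o(x)·t_o(x) for all x ∈ E, and all expectations below are finite. Then for all bounded measurable functions r, y, t : E → ℝ, E[ (−2/a)·(Y + y_o(X) − 2·(r_o(X)/a)·t_o(X))·(t(X) − t_o(X))·(r(X) − r_o(X)) + (2/a)·(T − t_o(X))·(y(X) − y_o(X))·(r(X) − r_o(X)) ] = 0. Equivalently, the mixed directional derivative D_g D_r L^ortho-2(r_o, g_o)[r − r_o, g − g_o] of the population loss L^ortho-2(r; y, t) = E[(Y − (T − t(X))·y(X)/t(X) − r(X)·t(X)/a)²] vanishes at the true nuisance pair g_o = (y_o, t_o) in all directions. -/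

import Mathlib

open MeasureTheory

/-- Auxiliary: a bounded measurable function of `E` is integrable on a probability space
after composing with `X`. -/
lemma aux_int_comp {Ω : Type*} [MeasurableSpace Ω] {μ : Measure Ω} [IsProbabilityMeasure μ]
    {E : Type*} [mE : MeasurableSpace E] {X : Ω → E} (hX : Measurable X)
    {f : E → ℝ} (hf : Measurable f) (hfB : ∃ C, ∀ x, |f x| ≤ C) :
    Integrable (fun ω => f (X ω)) μ := by
  obtain ⟨C, hC⟩ := hfB
  exact (integrable_const C).mono' ((hf.comp hX).aestronglyMeasurable)
    (Filter.Eventually.of_forall fun ω => by simpa using hC (X ω))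

/-- Auxiliary: if `E[Z | X] = z(X)` a.s. and `f` is bounded measurable, then
`∫ (Z - z(X)) f(X) = 0`. -/
lemma aux_orth {Ω : Type*} [m0 : MeasurableSpace Ω] {μ : Measure Ω} [IsProbabilityMeasure μ]
    {E : Type*} [mE : MeasurableSpace E] {X : Ω → E} (hX : Measurable X)
    {Z : Ω → ℝ} (hZint : Integrable Z μ)
    {z : E → ℝ} (hz : Measurable z) (hzB : ∃ C, ∀ x, |z x| ≤ C)
    (hcond : μ[Z | MeasurableSpace.comap X mE] =ᵐ[μ] fun ω => z (X ω))
    {f : E → ℝ} (hf : Measurable f) (hfB : ∃ C, ∀ x, |f x| ≤ C) :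
    ∫ ω, (Z ω - z (X ω)) * f (X ω) ∂μ = 0 := by
  obtain ⟨C, hC⟩ := hfB
  have hm : MeasurableSpace.comap X mE ≤ m0 := hX.comap_le
  have hfXm : Measurable[MeasurableSpace.comap X mE] fun ω => f (X ω) :=
    hf.comp (Measurable.of_comap_le le_rfl)
  have h1 : μ[(fun ω => f (X ω)) * Z | MeasurableSpace.comap X mE] =ᵐ[μ]
      (fun ω => f (X ω)) * μ[Z | MeasurableSpace.comap X mE] :=
    condExp_stronglyMeasurable_mul_of_bound hm hfXm.stronglyMeasurable hZint C
      (Filter.Eventually.of_forall fun ω => by simpa using hC (X ω))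
  have hfXaesm : AEStronglyMeasurable (fun ω => f (X ω)) μ :=
    (hf.comp hX).aestronglyMeasurable
  have hint1 : Integrable (fun ω => f (X ω) * Z ω) μ :=
    hZint.bdd_mul hfXaesm (Filter.Eventually.of_forall fun ω => by simpa using hC (X ω))
  have hint2 : Integrable (fun ω => z (X ω) * f (X ω)) μ := by
    obtain ⟨Cz, hCz⟩ := hzB
    exact (aux_int_comp hX hf ⟨C, hC⟩).bdd_mul ((hz.comp hX).aestronglyMeasurable)
      (Filter.Eventually.of_forall fun ω => by simpa using hCz (X ω))
  have key : ∫ ω, f (X ω) * Z ω ∂μ = ∫ ω, f (X ω) * z (X ω) ∂μ := by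
    calc ∫ ω, f (X ω) * Z ω ∂μ
        = ∫ ω, ((fun ω => f (X ω)) * Z) ω ∂μ := by simp [Pi.mul_apply]
      _ = ∫ ω, (μ[(fun ω => f (X ω)) * Z | MeasurableSpace.comap X mE]) ω ∂μ :=
          (integral_condExp hm).symm
      _ = ∫ ω, f (X ω) * z (X ω) ∂μ := by
          refine integral_congr_ae (h1.trans ?_)
          filter_upwards [hcond] with ω hω
          simp [hω]
  have hsplit : ∀ ω, (Z ω - z (X ω)) * f (X ω)
      = f (X ω) * Z ω - z (X ω) * f (X ω) := fun ω => by ring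
  simp only [hsplit]
  rw [integral_sub hint1 hint2, key, sub_eq_zero]
  exact integral_congr_ae (Filter.Eventually.of_forall fun ω => mul_comm _ _)

/-- **Neyman orthogonality of the loss `L^ortho-2` for unknown barrier `a`.**
If `E[Y | X] = y_o(X)` a.s., `E[T | X] = t_o(X)` a.s., and `a * y_o = r_o * t_o` pointwise,
with `y_o, t_o, r_o` bounded measurable, then for all bounded measurable `r, y, t` the mixed
directional derivative of `L^ortho-2` vanishes:
`E[(-2/a)(Y + y_o(X) - 2 (r_o(X)/a) t_o(X))(t(X) - t_o(X))(r(X) - r_o(X))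
   + (2/a)(T - t_o(X))(y(X) - y_o(X))(r(X) - r_o(X))] = 0`. -/
theorem neyman_orthogonality_ortho2_loss
    {Ω : Type*} [MeasurableSpace Ω] {μ : Measure Ω} [IsProbabilityMeasure μ]
    {E : Type*} [mE : MeasurableSpace E] (X : Ω → E) (hX : Measurable X)
    (a : ℝ) (ha : 0 < a)
    (Y T : Ω → ℝ) (hY : Measurable Y) (hT : Measurable T)
    (hYint : Integrable Y μ) (hTint : Integrable T μ)
    (y_o t_o r_o : E → ℝ) (hyo : Measurable y_o) (hto : Measurable t_o) (hro : Measurable r_o)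
    (hyoB : ∃ C, ∀ x, |y_o x| ≤ C) (htoB : ∃ C, ∀ x, |t_o x| ≤ C) (hroB : ∃ C, ∀ x, |r_o x| ≤ C)
    (hYcond : μ[Y | MeasurableSpace.comap X mE] =ᵐ[μ] fun ω => y_o (X ω))
    (hTcond : μ[T | MeasurableSpace.comap X mE] =ᵐ[μ] fun ω => t_o (X ω))
    (hEZ : ∀ x, a * y_o x = r_o x * t_o x)
    (r y t : E → ℝ) (hr : Measurable r) (hy : Measurable y) (ht : Measurable t)
    (hrB : ∃ C, ∀ x, |r x| ≤ C) (hyB : ∃ C, ∀ x, |y x| ≤ C) (htB : ∃ C, ∀ x, |t x| ≤ C)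
    (hint : Integrable (fun ω =>
      (-2 / a) * (Y ω + y_o (X ω) - 2 * (r_o (X ω) / a) * t_o (X ω)) *
        (t (X ω) - t_o (X ω)) * (r (X ω) - r_o (X ω)) +
      (2 / a) * (T ω - t_o (X ω)) * (y (X ω) - y_o (X ω)) * (r (X ω) - r_o (X ω))) μ) :
    ∫ ω, ((-2 / a) * (Y ω + y_o (X ω) - 2 * (r_o (X ω) / a) * t_o (X ω)) *
        (t (X ω) - t_o (X ω)) * (r (X ω) - r_o (X ω)) +
      (2 / a) * (T ω - t_o (X ω)) * (y (X ω) - y_o (X ω)) * (r (X ω) - r_o (X ω))) ∂μ = 0 := by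
  obtain ⟨Cy, hCy⟩ := hyoB
  obtain ⟨Ct, hCt⟩ := htoB
  obtain ⟨Cr, hCr⟩ := hrB
  obtain ⟨Cy', hCy'⟩ := hyB
  obtain ⟨Ct', hCt'⟩ := htB
  obtain ⟨Cro, hCro⟩ := hroB
  -- the two "direction" functions
  set A : E → ℝ := fun x => (-2 / a) * ((t x - t_o x) * (r x - r_o x)) with hA
  set B : E → ℝ := fun x => (2 / a) * ((y x - y_o x) * (r x - r_o x)) with hB
  have hAm : Measurable A := (measurable_const.mul ((ht.sub hto).mul (hr.sub hro)))
  have hBm : Measurable B := (measurable_const.mul ((hy.sub hyo).mul (hr.sub hro)))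
  have hAB : ∃ C, ∀ x, |A x| ≤ C := by
    refine ⟨|(-2/a)| * ((Ct' + Ct) * (Cr + Cro)), fun x => ?_⟩
    have h1 : |t x - t_o x| ≤ Ct' + Ct :=
      (abs_sub _ _).trans (add_le_add (hCt' x) (hCt x))
    have h2 : |r x - r_o x| ≤ Cr + Cro :=
      (abs_sub _ _).trans (add_le_add (hCr x) (hCro x))
    calc |A x| = |(-2/a)| * (|t x - t_o x| * |r x - r_o x|) := by
          simp [hA, abs_mul]
      _ ≤ |(-2/a)| * ((Ct' + Ct) * (Cr + Cro)) :=
          mul_le_mul_of_nonneg_left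
            (mul_le_mul h1 h2 (abs_nonneg _) ((abs_nonneg _).trans h1)) (abs_nonneg _)
  have hBB : ∃ C, ∀ x, |B x| ≤ C := by
    refine ⟨|(2/a)| * ((Cy' + Cy) * (Cr + Cro)), fun x => ?_⟩
    have h1 : |y x - y_o x| ≤ Cy' + Cy :=
      (abs_sub _ _).trans (add_le_add (hCy' x) (hCy x))
    have h2 : |r x - r_o x| ≤ Cr + Cro :=
      (abs_sub _ _).trans (add_le_add (hCr x) (hCro x))
    calc |B x| = |(2/a)| * (|y x - y_o x| * |r x - r_o x|) := by
          simp [hB, abs_mul]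
      _ ≤ |(2/a)| * ((Cy' + Cy) * (Cr + Cro)) :=
          mul_le_mul_of_nonneg_left
            (mul_le_mul h1 h2 (abs_nonneg _) ((abs_nonneg _).trans h1)) (abs_nonneg _)
  -- pointwise simplification of the integrand using the EZ relation
  have hkey : ∀ ω,
      (-2 / a) * (Y ω + y_o (X ω) - 2 * (r_o (X ω) / a) * t_o (X ω)) *
        (t (X ω) - t_o (X ω)) * (r (X ω) - r_o (X ω)) +
      (2 / a) * (T ω - t_o (X ω)) * (y (X ω) - y_o (X ω)) * (r (X ω) - r_o (X ω))
      = (Y ω - y_o (X ω)) * A (X ω) + (T ω - t_o (X ω)) * B (X ω) := by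
    intro ω
    have h := hEZ (X ω)
    have ha' : a ≠ 0 := ne_of_gt ha
    have h2 : 2 * (r_o (X ω) / a) * t_o (X ω) = 2 * y_o (X ω) := by
      field_simp
      linarith [h]
    rw [h2]
    simp only [hA, hB]
    ring
  simp only [hkey]
  -- integrability of the two pieces
  have hI1 : Integrable (fun ω => (Y ω - y_o (X ω)) * A (X ω)) μ := by
    obtain ⟨CA, hCA⟩ := hAB
    have := (hYint.sub (aux_int_comp hX hyo ⟨Cy, hCy⟩)).bdd_mul
      (f := fun ω => A (X ω)) ((hAm.comp hX).aestronglyMeasurable)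
      (Filter.Eventually.of_forall fun ω => by simpa using hCA (X ω))
    exact this.congr (Filter.Eventually.of_forall fun ω => by simp [mul_comm])
  have hI2 : Integrable (fun ω => (T ω - t_o (X ω)) * B (X ω)) μ := by
    obtain ⟨CB, hCB⟩ := hBB
    have := (hTint.sub (aux_int_comp hX hto ⟨Ct, hCt⟩)).bdd_mul
      (f := fun ω => B (X ω)) ((hBm.comp hX).aestronglyMeasurable)
      (Filter.Eventually.of_forall fun ω => by simpa using hCB (X ω))
    exact this.congr (Filter.Eventually.of_forall fun ω => by simp [mul_comm])
  rw [integral_add hI1 hI2,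
    aux_orth hX hYint hyo ⟨Cy, hCy⟩ hYcond hAm hAB,
    aux_orth hX hTint hto ⟨Ct, hCt⟩ hTcond hBm hBB]
  ring
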